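/- Let 0 < Lint < Lext and 0 < b < Lext be real numbers, and set Φ(β) := Lext + b·cos β. Let H : ℝ → ℝ and F : ℝ × ℝ → ℝ be twice continuously differentiable on an open set containing (Lint, Lext] and (Lint, Lext] × ℝ respectively, with H > 0 and F > 0 there. Suppose F(Lext, β) = Φ(β)² for all β, H(Lext) = 1, and additionally ∂ℓF(Lext, β) = ∂ℓ²F(Lext, β) = 0 for all β. Then for every ϑ ∈ [0,1], as (ℓ, β) → (Lext, π) with ℓ < Lext, the scalar Z_ϑ(ℓ,β) converges to −1/(b(Lext−b)) + (ϑ²/4)·(2H''(Lext) − H'(Lext)²). -/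

import Mathlib

open Real Filter Set

/-- First partial derivative of `F` with respect to its first argument `ℓ`. -/
noncomputable def pdl (F : ℝ × ℝ → ℝ) (l β : ℝ) : ℝ := deriv (fun x => F (x, β)) l

/-- Second partial derivative of `F` with respect to its first argument `ℓ`. -/
noncomputable def pdll (F : ℝ × ℝ → ℝ) (l β : ℝ) : ℝ := deriv (fun x => pdl F x β) l

/-- First partial derivative of `F` with respect to its second argument `β`. -/
noncomputable def pdb (F : ℝ × ℝ → ℝ) (l β : ℝ) : ℝ := deriv (fun y => F (l, y)) β

/-- Second partial derivative of `F` with respect to its second argument `β`. -/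
noncomputable def pdbb (F : ℝ × ℝ → ℝ) (l β : ℝ) : ℝ := deriv (fun y => pdb F l y) β

/-- The scalar `Z_ϑ = G_{ab} (A_ϑ)^a (A_ϑ)^b` for the metric
`ds² = −H dτ² + dℓ² + F dα² + b² dβ²` and `A_ϑ = H^{−1/2} ∂_τ + ϑ b^{−1} ∂_β`. -/
noncomputable def Zscalar (b : ℝ) (H : ℝ → ℝ) (F : ℝ × ℝ → ℝ) (ϑ l β : ℝ) : ℝ :=
  (1 / (4 * b ^ 2)) * ((pdb F l β / F (l, β)) ^ 2 - 2 * pdbb F l β / F (l, β))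
  + ((1 - ϑ ^ 2) / 4) * ((pdl F l β / F (l, β)) ^ 2 - 2 * pdll F l β / F (l, β))
  + (ϑ ^ 2 / 4) * (2 * deriv (deriv H) l / H l - (deriv H l / H l) ^ 2
      + (deriv H l / H l) * (pdl F l β / F (l, β)))

set_option maxHeartbeats 1000000 in
/-- Asymptotic formula (4.21) in the proof of Theorem 1 of the paper: if moreover the first and
second `ℓ`-derivatives of `F` vanish at `ℓ = Lext`, then `Z_ϑ` tends to
`−1/(b(Lext−b)) + (ϑ²/4)(2H''(Lext) − H'(Lext)²)` as `(ℓ, β) → (Lext, π)` with `ℓ < Lext`. -/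
theorem Z_tendsto_at_external_boundary_of_lderivs_vanish
    (Lint Lext b : ℝ) (hLint : 0 < Lint) (hLL : Lint < Lext) (hb : 0 < b) (hbL : b < Lext)
    (H : ℝ → ℝ) (F : ℝ × ℝ → ℝ)
    (U : Set ℝ) (hUopen : IsOpen U) (hUsub : Set.Ioc Lint Lext ⊆ U)
    (V : Set (ℝ × ℝ)) (hVopen : IsOpen V)
    (hVsub : Set.Ioc Lint Lext ×ˢ (Set.univ : Set ℝ) ⊆ V)
    (hH : ContDiffOn ℝ 2 H U) (hF : ContDiffOn ℝ 2 F V)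
    (hHpos : ∀ x ∈ U, 0 < H x) (hFpos : ∀ p ∈ V, 0 < F p)
    (hFext : ∀ β : ℝ, F (Lext, β) = (Lext + b * Real.cos β) ^ 2)
    (hHext : H Lext = 1)
    (hdl : ∀ β : ℝ, pdl F Lext β = 0) (hdll : ∀ β : ℝ, pdll F Lext β = 0)
    (ϑ : ℝ) (hϑ : ϑ ∈ Set.Icc (0 : ℝ) 1) :
    Filter.Tendsto (fun p : ℝ × ℝ => Zscalar b H F ϑ p.1 p.2)
      (nhdsWithin (Lext, Real.pi) {p : ℝ × ℝ | p.1 < Lext})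
      (nhds (-(1 / (b * (Lext - b)))
        + (ϑ ^ 2 / 4) * (2 * deriv (deriv H) Lext - (deriv H Lext) ^ 2))) := by
  have hUmem : Lext ∈ U := hUsub ⟨hLL, le_rfl⟩
  have hVmem : ((Lext, Real.pi) : ℝ × ℝ) ∈ V := hVsub ⟨⟨hLL, le_rfl⟩, Set.mem_univ _⟩
  set g := fderiv ℝ F with hgdef
  have hg : ContDiffOn ℝ 1 g V := hF.fderiv_of_isOpen hVopen (by norm_num)
  have hFdiff : DifferentiableOn ℝ F V := hF.differentiableOn (by norm_num)
  have hgdiff : DifferentiableOn ℝ g V := hg.differentiableOn (by norm_num)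
  have hg2' : ContDiffOn ℝ 0 (fderiv ℝ g) V := hg.fderiv_of_isOpen hVopen (by norm_num)
  have hg2 : ContinuousOn (fderiv ℝ g) V := hg2'.continuousOn
  -- partial derivatives expressed via fderiv on V
  have key1 : ∀ p ∈ V, ∀ β : ℝ,
      HasDerivAt (fun x : ℝ => F (x, β)) (g (p.1, β) (1, 0)) p.1 → True := fun _ _ _ _ => trivial
  have hpdl : ∀ p ∈ V, pdl F p.1 p.2 = g p (1, 0) := by
    rintro ⟨l, β⟩ hp
    have hd : DifferentiableAt ℝ F (l, β) := hFdiff.differentiableAt (hVopen.mem_nhds hp)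
    have h1 : HasDerivAt (fun x : ℝ => ((x, β) : ℝ × ℝ)) ((1 : ℝ), (0 : ℝ)) l :=
      (hasDerivAt_id l).prodMk (hasDerivAt_const l β)
    have := hd.hasFDerivAt.comp_hasDerivAt l h1
    exact this.deriv
  have hpdb : ∀ p ∈ V, pdb F p.1 p.2 = g p (0, 1) := by
    rintro ⟨l, β⟩ hp
    have hd : DifferentiableAt ℝ F (l, β) := hFdiff.differentiableAt (hVopen.mem_nhds hp)
    have h1 : HasDerivAt (fun y : ℝ => ((l, y) : ℝ × ℝ)) ((0 : ℝ), (1 : ℝ)) β :=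
      (hasDerivAt_const β l).prodMk (hasDerivAt_id β)
    have := hd.hasFDerivAt.comp_hasDerivAt β h1
    exact this.deriv
  have hpdll : ∀ p ∈ V, pdll F p.1 p.2 = fderiv ℝ g p (1, 0) (1, 0) := by
    rintro ⟨l, β⟩ hp
    have hgd : DifferentiableAt ℝ g (l, β) := hgdiff.differentiableAt (hVopen.mem_nhds hp)
    have h1 : HasDerivAt (fun x : ℝ => ((x, β) : ℝ × ℝ)) ((1 : ℝ), (0 : ℝ)) l :=
      (hasDerivAt_id l).prodMk (hasDerivAt_const l β)
    have h2 : HasDerivAt (fun x : ℝ => g (x, β)) (fderiv ℝ g (l, β) (1, 0)) l :=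
      hgd.hasFDerivAt.comp_hasDerivAt l h1
    have h3 : HasDerivAt (fun x : ℝ => g (x, β) ((1 : ℝ), (0 : ℝ)))
        (fderiv ℝ g (l, β) (1, 0) (1, 0)) l := by
      simpa using h2.clm_apply (hasDerivAt_const l ((1 : ℝ), (0 : ℝ)))
    have hev : (fun x : ℝ => pdl F x β) =ᶠ[nhds l] fun x : ℝ => g (x, β) (1, 0) := by
      have hc : Continuous (fun x : ℝ => ((x, β) : ℝ × ℝ)) := by continuity
      filter_upwards [(hVopen.preimage hc).mem_nhds (show ((l, β) : ℝ × ℝ) ∈ V from hp)]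
        with x hx
      exact hpdl (x, β) hx
    rw [pdll, hev.deriv_eq, h3.deriv]
  have hpdbb : ∀ p ∈ V, pdbb F p.1 p.2 = fderiv ℝ g p (0, 1) (0, 1) := by
    rintro ⟨l, β⟩ hp
    have hgd : DifferentiableAt ℝ g (l, β) := hgdiff.differentiableAt (hVopen.mem_nhds hp)
    have h1 : HasDerivAt (fun y : ℝ => ((l, y) : ℝ × ℝ)) ((0 : ℝ), (1 : ℝ)) β :=
      (hasDerivAt_const β l).prodMk (hasDerivAt_id β)
    have h2 : HasDerivAt (fun y : ℝ => g (l, y)) (fderiv ℝ g (l, β) (0, 1)) β :=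
      hgd.hasFDerivAt.comp_hasDerivAt β h1
    have h3 : HasDerivAt (fun y : ℝ => g (l, y) ((0 : ℝ), (1 : ℝ)))
        (fderiv ℝ g (l, β) (0, 1) (0, 1)) β := by
      simpa using h2.clm_apply (hasDerivAt_const β ((0 : ℝ), (1 : ℝ)))
    have hev : (fun y : ℝ => pdb F l y) =ᶠ[nhds β] fun y : ℝ => g (l, y) (0, 1) := by
      have hc : Continuous (fun y : ℝ => ((l, y) : ℝ × ℝ)) := by continuity
      filter_upwards [(hVopen.preimage hc).mem_nhds (show ((l, β) : ℝ × ℝ) ∈ V from hp)]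
        with y hy
      exact hpdb (l, y) hy
    rw [pdbb, hev.deriv_eq, h3.deriv]
  -- the continuous model function
  set Zx : ℝ × ℝ → ℝ := fun p =>
    (1 / (4 * b ^ 2)) * ((g p (0, 1) / F p) ^ 2 - 2 * (fderiv ℝ g p (0, 1) (0, 1)) / F p)
    + ((1 - ϑ ^ 2) / 4) * ((g p (1, 0) / F p) ^ 2 - 2 * (fderiv ℝ g p (1, 0) (1, 0)) / F p)
    + (ϑ ^ 2 / 4) * (2 * deriv (deriv H) p.1 / H p.1 - (deriv H p.1 / H p.1) ^ 2
        + (deriv H p.1 / H p.1) * (g p (1, 0) / F p)) with hZxdef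
  have hFne : F (Lext, Real.pi) ≠ 0 := ne_of_gt (hFpos _ hVmem)
  have hHne : H Lext ≠ 0 := ne_of_gt (hHpos _ hUmem)
  -- continuity of Zx at the point
  have cF : ContinuousAt F (Lext, Real.pi) :=
    (hF.continuousOn.continuousAt (hVopen.mem_nhds hVmem))
  have cg0 : ContinuousAt g (Lext, Real.pi) :=
    (hg.continuousOn.continuousAt (hVopen.mem_nhds hVmem))
  have cg2 : ContinuousAt (fderiv ℝ g) (Lext, Real.pi) :=
    hg2.continuousAt (hVopen.mem_nhds hVmem)
  have capply : ∀ v : ℝ × ℝ, ContinuousAt (fun p => g p v) (Lext, Real.pi) := by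
    intro v
    exact (isBoundedBilinearMap_apply.continuous.continuousAt.comp (cg0.prodMk continuousAt_const))
  have capply2 : ∀ v : ℝ × ℝ, ContinuousAt (fun p => fderiv ℝ g p v v) (Lext, Real.pi) := by
    intro v
    have c1 : ContinuousAt (fun p => fderiv ℝ g p v) (Lext, Real.pi) :=
      (isBoundedBilinearMap_apply.continuous.continuousAt.comp (cg2.prodMk continuousAt_const))
    exact (isBoundedBilinearMap_apply.continuous.continuousAt.comp (c1.prodMk continuousAt_const))
  have hHd : ContDiffOn ℝ 1 (deriv H) U := hH.deriv_of_isOpen hUopen (by norm_num)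
  have cH1 : ContinuousAt (deriv H) Lext :=
    hHd.continuousOn.continuousAt (hUopen.mem_nhds hUmem)
  have cH2'' : ContDiffOn ℝ 0 (deriv (deriv H)) U := hHd.deriv_of_isOpen hUopen (by norm_num)
  have cH2 : ContinuousAt (deriv (deriv H)) Lext :=
    cH2''.continuousOn.continuousAt (hUopen.mem_nhds hUmem)
  have cH : ContinuousAt H Lext := hH.continuousOn.continuousAt (hUopen.mem_nhds hUmem)
  have cH1' : ContinuousAt (fun p : ℝ × ℝ => deriv H p.1) (Lext, Real.pi) :=
    cH1.comp_of_eq continuousAt_fst rfl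
  have cH2' : ContinuousAt (fun p : ℝ × ℝ => deriv (deriv H) p.1) (Lext, Real.pi) :=
    cH2.comp_of_eq continuousAt_fst rfl
  have cH' : ContinuousAt (fun p : ℝ × ℝ => H p.1) (Lext, Real.pi) :=
    cH.comp_of_eq continuousAt_fst rfl
  have hHne' : H ((Lext, Real.pi) : ℝ × ℝ).1 ≠ 0 := hHne
  have cZ : ContinuousAt Zx (Lext, Real.pi) := by
    apply ContinuousAt.add
    apply ContinuousAt.add
    · exact continuousAt_const.mul
        ((((capply (0,1)).div cF hFne).pow 2).sub
          (((continuousAt_const.mul (capply2 (0,1)))).div cF hFne))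
    · exact continuousAt_const.mul
        ((((capply (1,0)).div cF hFne).pow 2).sub
          (((continuousAt_const.mul (capply2 (1,0)))).div cF hFne))
    · exact continuousAt_const.mul
        ((((continuousAt_const.mul cH2').div cH' hHne').sub
          (((cH1'.div cH' hHne')).pow 2)).add
          ((cH1'.div cH' hHne').mul ((capply (1,0)).div cF hFne)))
  -- value computation:
  have hpdb_all : ∀ y : ℝ, pdb F Lext y = 2 * (Lext + b * Real.cos y) * (-(b * Real.sin y)) := by
    intro y
    have hc : HasDerivAt (fun y : ℝ => Lext + b * Real.cos y) (-(b * Real.sin y)) y := by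
      have := ((Real.hasDerivAt_cos y).const_mul b).const_add Lext
      rw [show -(b * Real.sin y) = b * -Real.sin y by ring]; exact this
    have h : HasDerivAt (fun y : ℝ => (Lext + b * Real.cos y) ^ 2)
        (2 * (Lext + b * Real.cos y) * (-(b * Real.sin y))) y := by
      simpa [Pi.pow_def] using hc.pow 2
    have hfun : (fun y : ℝ => F (Lext, y)) = fun y : ℝ => (Lext + b * Real.cos y) ^ 2 :=
      funext hFext
    rw [pdb, hfun]
    exact h.deriv
  have hpdb_val : pdb F Lext Real.pi = 0 := by
    rw [hpdb_all]; simp [Real.sin_pi]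
  have hpdbb_val : pdbb F Lext Real.pi = 2 * (Lext - b) * b := by
    have hfun : (fun y : ℝ => pdb F Lext y)
        = fun y : ℝ => 2 * (Lext + b * Real.cos y) * (-(b * Real.sin y)) := funext hpdb_all
    rw [pdbb, hfun]
    have h1 : HasDerivAt (fun y : ℝ => 2 * (Lext + b * Real.cos y))
        (2 * (-(b * Real.sin Real.pi))) Real.pi := by
      have hc : HasDerivAt (fun y : ℝ => Lext + b * Real.cos y) (-(b * Real.sin Real.pi))
          Real.pi := by
        have := ((Real.hasDerivAt_cos Real.pi).const_mul b).const_add Lext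
        rw [show -(b * Real.sin Real.pi) = b * -Real.sin Real.pi by ring]; exact this
      exact hc.const_mul 2
    have h2 : HasDerivAt (fun y : ℝ => -(b * Real.sin y)) (-(b * Real.cos Real.pi)) Real.pi := by
      have := ((Real.hasDerivAt_sin Real.pi).const_mul b).neg
      exact this
    have := (show HasDerivAt (fun y => 2 * (Lext + b * Real.cos y) * -(b * Real.sin y)) _ Real.pi from h1.mul h2).deriv
    rw [this, Real.sin_pi, Real.cos_pi]
    ring
  -- values of the fderiv expressions at the point
  have e1 : g (Lext, Real.pi) (1, 0) = 0 := by
    have := hpdl (Lext, Real.pi) hVmem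
    simp only at this
    rw [← this, hdl]
  have e2 : fderiv ℝ g (Lext, Real.pi) (1, 0) (1, 0) = 0 := by
    have := hpdll (Lext, Real.pi) hVmem
    simp only at this
    rw [← this, hdll]
  have e3 : g (Lext, Real.pi) (0, 1) = 0 := by
    have := hpdb (Lext, Real.pi) hVmem
    simp only at this
    rw [← this, hpdb_val]
  have e4 : fderiv ℝ g (Lext, Real.pi) (0, 1) (0, 1) = 2 * (Lext - b) * b := by
    have := hpdbb (Lext, Real.pi) hVmem
    simp only at this
    rw [← this, hpdbb_val]
  have hFval : F (Lext, Real.pi) = (Lext - b) ^ 2 := by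
    rw [hFext]; simp [Real.cos_pi]; ring
  have hZval : Zx (Lext, Real.pi) = -(1 / (b * (Lext - b)))
      + (ϑ ^ 2 / 4) * (2 * deriv (deriv H) Lext - (deriv H Lext) ^ 2) := by
    simp only [hZxdef, e1, e2, e3, e4, hFval]
    have h1 : H ((Lext, Real.pi) : ℝ × ℝ).1 = 1 := hHext
    have hLb : Lext - b ≠ 0 := ne_of_gt (sub_pos.mpr hbL)
    simp only [h1]
    field_simp
    ring
  -- conclude
  have heq : (fun p : ℝ × ℝ => Zscalar b H F ϑ p.1 p.2)
      =ᶠ[nhdsWithin (Lext, Real.pi) {p : ℝ × ℝ | p.1 < Lext}] Zx := by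
    filter_upwards [nhdsWithin_le_nhds (hVopen.mem_nhds hVmem)] with p hp
    simp only [Zscalar, hZxdef, hpdl p hp, hpdb p hp, hpdll p hp, hpdbb p hp, Prod.mk.eta]
  have ht : Filter.Tendsto Zx (nhdsWithin (Lext, Real.pi) {p : ℝ × ℝ | p.1 < Lext})
      (nhds (Zx (Lext, Real.pi))) := cZ.continuousWithinAt
  rw [hZval] at ht
  exact ht.congr' heq.symm
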